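/- Let T > 0 and let f, y₁, y₂ : [0,T] → ℝ be continuous with y₁(0) = y₂(0), f(0) + y₁(0) ≥ 0, and suppose y₁(t) − y₁(s) > y₂(t) − y₂(s) for all 0 ≤ s < t ≤ T. Then the reflected paths satisfy x_{f+y₁}(t) ≥ x_{f+y₂}(t) for all t ∈ [0,T]. -/

import Mathlib

open Set

/-- The Skorohod reflection term: `m_f(t) = sup_{0 ≤ s ≤ t} max(-f(s), 0)`. -/
noncomputable def mf (f : ℝ → ℝ) (t : ℝ) : ℝ :=
  sSup ((fun s => max (-f s) 0) '' Set.Icc 0 t)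

/-- Comparison of reflected paths: if the increments of `y₁` strictly dominate those of
`y₂`, then the reflected path of `f + y₁` dominates that of `f + y₂` on `[0,T]`. -/
theorem stmt_4 (T : ℝ) (hT : 0 < T) (f y₁ y₂ : ℝ → ℝ)
    (hf : ContinuousOn f (Set.Icc 0 T))
    (hy₁ : ContinuousOn y₁ (Set.Icc 0 T)) (hy₂ : ContinuousOn y₂ (Set.Icc 0 T))
    (h0 : y₁ 0 = y₂ 0) (hinit : 0 ≤ f 0 + y₁ 0)
    (hincr : ∀ s t : ℝ, 0 ≤ s → s < t → t ≤ T → y₂ t - y₂ s < y₁ t - y₁ s) :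
    ∀ t ∈ Set.Icc 0 T,
      (f t + y₂ t) + mf (fun u => f u + y₂ u) t ≤
      (f t + y₁ t) + mf (fun u => f u + y₁ u) t := by
  intro t ht
  obtain ⟨ht0, htT⟩ := ht
  -- d s = y₁ s - y₂ s is nonneg and ≤ d t on [0,t]
  have hd : ∀ s, 0 ≤ s → s ≤ T → 0 ≤ y₁ s - y₂ s := by
    intro s hs hsT
    rcases eq_or_lt_of_le hs with h | h
    · simp [← h, h0]
    · have := hincr 0 s le_rfl h hsT
      have h0' : y₂ 0 = y₁ 0 := h0.symm
      linarith
  have hdt : ∀ s, 0 ≤ s → s ≤ t → y₁ s - y₂ s ≤ y₁ t - y₂ t := by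
    intro s hs hst
    rcases eq_or_lt_of_le hst with h | h
    · simp [h]
    · have := hincr s t hs h htT
      linarith
  -- m₁ is bdd above and nonneg
  have hsub : Set.Icc (0:ℝ) t ⊆ Set.Icc 0 T := Set.Icc_subset_Icc le_rfl htT
  have hcont : ContinuousOn (fun s => max (-(f s + y₁ s)) 0) (Set.Icc 0 t) :=
    ContinuousOn.sup (((hf.add hy₁).mono hsub).neg) continuousOn_const
  have hbdd : BddAbove ((fun s => max (-(f s + y₁ s)) 0) '' Set.Icc 0 t) :=
    (isCompact_Icc.image_of_continuousOn hcont).bddAbove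
  have hm1_nonneg : 0 ≤ mf (fun u => f u + y₁ u) t := by
    have hmem : max (-(f 0 + y₁ 0)) 0 ∈ (fun s => max (-(f s + y₁ s)) 0) '' Set.Icc 0 t :=
      ⟨0, ⟨le_rfl, ht0⟩, rfl⟩
    have := le_csSup hbdd hmem
    exact le_trans (le_max_right _ _) this
  have hdt0 : 0 ≤ y₁ t - y₂ t := hd t ht0 htT
  -- key: m₂ t ≤ m₁ t + (y₁ t - y₂ t)
  have key : mf (fun u => f u + y₂ u) t ≤ mf (fun u => f u + y₁ u) t + (y₁ t - y₂ t) := by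
    apply Real.sSup_le
    · rintro x ⟨s, hs, rfl⟩
      obtain ⟨hs0, hst⟩ := hs
      have hds : 0 ≤ y₁ s - y₂ s := hd s hs0 (hst.trans htT)
      have h1 : max (-(f s + y₂ s)) 0 ≤ max (-(f s + y₁ s)) 0 + (y₁ s - y₂ s) := by
        apply max_le
        · have : -(f s + y₂ s) = -(f s + y₁ s) + (y₁ s - y₂ s) := by ring
          rw [this]
          exact add_le_add (le_max_left _ _) le_rfl
        · positivity
      have h2 : max (-(f s + y₁ s)) 0 ≤ mf (fun u => f u + y₁ u) t :=
        le_csSup hbdd ⟨s, ⟨hs0, hst⟩, rfl⟩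
      have h3 := hdt s hs0 hst
      calc max (-(f s + y₂ s)) 0 ≤ max (-(f s + y₁ s)) 0 + (y₁ s - y₂ s) := h1
        _ ≤ mf (fun u => f u + y₁ u) t + (y₁ t - y₂ t) := add_le_add h2 h3
    · linarith
  linarith
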